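/- Let m0, m1, m2 be Hessenberg functions on [n] and i ∈ [n] with m0(j)=m1(j)=m2(j) for all j ≠ i, m0(i)=m1(i)−1=m2(i)−2, and m1(m1(i)+1)=m1(m1(i)). Set l = m1(i) and s = (l,l+1). Then w_{m1}s < w_{m1} < s w_{m1} = w_{m2} in Bruhat order, w_{m0} ≤ w_{m1} with ℓ(w_{m0}) = ℓ(w_{m1}) − 1, and s w_{m0} < w_{m0}. -/

import Mathlib

open Equiv

/-- `rk w i j` = #{k ≤ i : w(k) ≤ j} (1-indexed), for `w ∈ S_n`. -/
def rk {n : ℕ} (w : Equiv.Perm (Fin n)) (i j : ℕ) : ℕ :=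
  (Finset.univ.filter (fun k : Fin n => (k : ℕ) + 1 ≤ i ∧ (w k : ℕ) + 1 ≤ j)).card

/-- Bruhat order on `S_n` via the rank-matrix criterion: `z ≤ w` iff
`r_{i,j}(z) ≥ r_{i,j}(w)` for all `i,j`. -/
def BruhatLE {n : ℕ} (z w : Equiv.Perm (Fin n)) : Prop :=
  ∀ i ≤ n, ∀ j ≤ n, rk w i j ≤ rk z i j

def BruhatLT {n : ℕ} (z w : Equiv.Perm (Fin n)) : Prop :=
  BruhatLE z w ∧ z ≠ w

/-- Coxeter length = number of inversions. -/
def len {n : ℕ} (w : Equiv.Perm (Fin n)) : ℕ :=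
  (Finset.univ.filter (fun p : Fin n × Fin n => p.1 < p.2 ∧ w p.2 < w p.1)).card

/-- One-line notation of `w`, 1-indexed, extended by the identity outside `[1,n]`
(so that `w(n+1) = n+1`). -/
def ol {n : ℕ} (w : Equiv.Perm (Fin n)) (k : ℕ) : ℕ :=
  if h : 1 ≤ k ∧ k ≤ n then ((w ⟨k - 1, by omega⟩ : Fin n) : ℕ) + 1 else k

/-- The coessential set of `w` (1-indexed pairs). -/
def Coess {n : ℕ} (w : Equiv.Perm (Fin n)) : Set (ℕ × ℕ) :=
  {p | 1 ≤ p.1 ∧ p.1 ≤ n ∧ 1 ≤ p.2 ∧ p.2 ≤ n ∧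
    ol w p.1 ≤ p.2 ∧ p.2 < ol w (p.1 + 1) ∧
    ol w⁻¹ p.2 ≤ p.1 ∧ p.1 < ol w⁻¹ (p.2 + 1)}

/-- `w` contains the pattern 312. -/
def Has312 {n : ℕ} (w : Equiv.Perm (Fin n)) : Prop :=
  ∃ a b c : Fin n, a < b ∧ b < c ∧ w b < w c ∧ w c < w a

/-- `w` contains the pattern 3412. -/
def Has3412 {n : ℕ} (w : Equiv.Perm (Fin n)) : Prop :=
  ∃ a b c d : Fin n, a < b ∧ b < c ∧ c < d ∧ w c < w d ∧ w d < w a ∧ w a < w b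

/-- `w` contains the pattern 4231. -/
def Has4231 {n : ℕ} (w : Equiv.Perm (Fin n)) : Prop :=
  ∃ a b c d : Fin n, a < b ∧ b < c ∧ c < d ∧ w d < w b ∧ w b < w c ∧ w c < w a

/-- `w` is smooth iff it avoids 3412 and 4231. -/
def SmoothPerm {n : ℕ} (w : Equiv.Perm (Fin n)) : Prop := ¬ Has3412 w ∧ ¬ Has4231 w

/-- `w` is codominant iff `i ≤ j` for every `(i,j)` in the coessential set. -/
def Codominant {n : ℕ} (w : Equiv.Perm (Fin n)) : Prop :=
  ∀ p ∈ Coess w, p.1 ≤ p.2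

/-- Lexicographic comparison on one-line notations. -/
def LexLe {n : ℕ} (u w : Equiv.Perm (Fin n)) : Prop :=
  u = w ∨ ∃ i : Fin n, (∀ j < i, u j = w j) ∧ u i < w i

/-- `m` is a Hessenberg function (0-indexed): non-decreasing and `m i ≥ i`. -/
def Hess {n : ℕ} (m : Fin n → Fin n) : Prop :=
  Monotone m ∧ ∀ i, i ≤ m i

/-- `w` is the lexicographically greatest permutation with `w i ≤ m i` for all `i`. -/
def IsLexMax {n : ℕ} (m : Fin n → Fin n) (w : Equiv.Perm (Fin n)) : Prop :=
  (∀ i, w i ≤ m i) ∧ ∀ u : Equiv.Perm (Fin n), (∀ i, u i ≤ m i) → LexLe u w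

instance {n : ℕ} (z w : Equiv.Perm (Fin n)) : Decidable (BruhatLE z w) := by
  unfold BruhatLE; exact Nat.decidableBallLE _ _

set_option linter.all false


/-- The modular-law configuration: for Hessenberg functions `m0, m1, m2`
differing only at `i` with `m0(i) = m1(i)-1 = m2(i)-2` and
`m1(m1(i)+1) = m1(m1(i))`, setting `s = (l,l+1)` with `l = m1(i)`, one has
`w_{m1}s < w_{m1} < s w_{m1} = w_{m2}`, `w_{m0} ⋖ w_{m1}` and `s w_{m0} < w_{m0}`. -/
lemma sum_split {n : ℕ} (p q : Fin n) (hpq : p ≠ q) (g : Fin n → ℕ) :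
    ∑ x, g x = g p + g q + ∑ x ∈ (Finset.univ.erase p).erase q, g x := by
  rw [← Finset.add_sum_erase _ g (Finset.mem_univ p)]
  rw [← Finset.add_sum_erase _ g (Finset.mem_erase.mpr ⟨hpq.symm, Finset.mem_univ q⟩)]
  ring

lemma rk_eq_sum {n : ℕ} (w : Perm (Fin n)) (i j : ℕ) :
    rk w i j = ∑ k : Fin n, (if ((k : ℕ) + 1 ≤ i ∧ (w k : ℕ) + 1 ≤ j) then 1 else 0) := by
  rw [rk, Finset.card_filter]

lemma rk_mul_swap {n : ℕ} (w : Perm (Fin n)) (p q : Fin n) (i j : ℕ) :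
    rk (w * Equiv.swap p q) i j
      = ∑ k : Fin n, (if ((Equiv.swap p q k : ℕ) + 1 ≤ i ∧ (w k : ℕ) + 1 ≤ j) then 1 else 0) := by
  rw [rk_eq_sum]
  rw [← Equiv.sum_comp (Equiv.swap p q)
    (fun k => if ((Equiv.swap p q k : ℕ) + 1 ≤ i ∧ (w k : ℕ) + 1 ≤ j) then 1 else 0)]
  refine Finset.sum_congr rfl (fun k _ => ?_)
  simp [Equiv.swap_apply_self]

lemma bruhatB {n : ℕ} (w : Perm (Fin n)) (p q : Fin n) (hpq : p < q) (hw : w q < w p) :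
    BruhatLE (w * Equiv.swap p q) w := by
  intro i _ j _
  rw [rk_eq_sum, rk_mul_swap]
  rw [sum_split p q hpq.ne (fun k => if ((k : ℕ) + 1 ≤ i ∧ (w k : ℕ) + 1 ≤ j) then 1 else 0)]
  rw [sum_split p q hpq.ne
    (fun k => if ((Equiv.swap p q k : ℕ) + 1 ≤ i ∧ (w k : ℕ) + 1 ≤ j) then 1 else 0)]
  have hrest : ∑ x ∈ (Finset.univ.erase p).erase q,
      (if ((x : ℕ) + 1 ≤ i ∧ (w x : ℕ) + 1 ≤ j) then 1 else 0)
      = ∑ x ∈ (Finset.univ.erase p).erase q,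
      (if ((Equiv.swap p q x : ℕ) + 1 ≤ i ∧ (w x : ℕ) + 1 ≤ j) then 1 else 0) := by
    refine Finset.sum_congr rfl (fun x hx => ?_)
    simp only [Finset.mem_erase] at hx
    rw [Equiv.swap_apply_of_ne_of_ne hx.2.1 hx.1]
  rw [← hrest]
  have h1 : ((Equiv.swap p q p : Fin n) : ℕ) = q := by rw [Equiv.swap_apply_left]
  have h2 : ((Equiv.swap p q q : Fin n) : ℕ) = p := by rw [Equiv.swap_apply_right]
  rw [h1, h2]
  have hpq' : (p : ℕ) < q := hpq
  have hw' : (w q : ℕ) < w p := hw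
  have : (if ((p : ℕ) + 1 ≤ i ∧ (w p : ℕ) + 1 ≤ j) then 1 else 0)
      + (if ((q : ℕ) + 1 ≤ i ∧ (w q : ℕ) + 1 ≤ j) then 1 else 0)
      ≤ (if ((q : ℕ) + 1 ≤ i ∧ (w p : ℕ) + 1 ≤ j) then 1 else 0)
      + (if ((p : ℕ) + 1 ≤ i ∧ (w q : ℕ) + 1 ≤ j) then 1 else 0) := by
    split_ifs <;> omega
  omega

lemma len_eq_sum {n : ℕ} (w : Perm (Fin n)) :
    len w = ∑ x : Fin n, ∑ y : Fin n,
      (if ((x : ℕ) < y ∧ (w y : ℕ) < w x) then 1 else 0) := by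
  rw [len, Finset.card_filter, Fintype.sum_prod_type]
  exact Finset.sum_congr rfl fun x _ => Finset.sum_congr rfl fun y _ => by rfl

lemma len_mul_swap_eq_sum {n : ℕ} (w : Perm (Fin n)) (p q : Fin n) :
    len (w * Equiv.swap p q) = ∑ x : Fin n, ∑ y : Fin n,
      (if ((Equiv.swap p q x : ℕ) < Equiv.swap p q y ∧ (w y : ℕ) < w x) then 1 else 0) := by
  have step1 : len (w * Equiv.swap p q) = ∑ z : Fin n × Fin n,
      (if ((Equiv.swap p q z.1 : ℕ) < Equiv.swap p q z.2 ∧ (w z.2 : ℕ) < w z.1) then 1 else 0) := by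
    rw [len, Finset.card_filter]
    rw [← Equiv.sum_comp (Equiv.prodCongr (Equiv.swap p q) (Equiv.swap p q))
      (fun z : Fin n × Fin n =>
        if ((Equiv.swap p q z.1 : ℕ) < Equiv.swap p q z.2 ∧ (w z.2 : ℕ) < w z.1) then 1 else 0)]
    refine Finset.sum_congr rfl (fun z _ => ?_)
    simp only [Equiv.prodCongr_apply, Prod.map_fst, Prod.map_snd, Equiv.swap_apply_self,
      Equiv.Perm.mul_apply]
    rfl
  rw [step1, Fintype.sum_prod_type]

lemma len_mul_swap {n : ℕ} (w : Perm (Fin n)) (p q : Fin n) (hpq : p < q) (hw : w p < w q)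
    (hbtw : ∀ k : Fin n, p < k → k < q → (w k : ℕ) < w p ∨ (w q : ℕ) < w k) :
    len (w * Equiv.swap p q) = len w + 1 := by
  classical
  set T := (Finset.univ.erase p).erase q with hT
  have hmemT : ∀ x : Fin n, x ∈ T → x ≠ p ∧ x ≠ q := by
    intro x hx; simp only [hT, Finset.mem_erase] at hx; exact ⟨hx.2.1, hx.1⟩
  set F : Fin n → Fin n → ℕ := fun x y =>
    if ((Equiv.swap p q x : ℕ) < Equiv.swap p q y ∧ (w y : ℕ) < w x) then 1 else 0 with hF
  set G : Fin n → Fin n → ℕ := fun x y =>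
    if ((x : ℕ) < y ∧ (w y : ℕ) < w x) then 1 else 0 with hG
  have hsplit : ∀ H : Fin n → Fin n → ℕ,
      (∑ x : Fin n, ∑ y : Fin n, H x y)
        = (H p p + H p q + H q p + H q q)
        + (∑ y ∈ T, (H p y + H q y)) + (∑ x ∈ T, (H x p + H x q))
        + ∑ x ∈ T, ∑ y ∈ T, H x y := by
    intro H
    rw [sum_split p q hpq.ne (fun x => ∑ y : Fin n, H x y)]
    rw [sum_split p q hpq.ne (H p), sum_split p q hpq.ne (H q)]
    have : ∀ x ∈ T, (∑ y : Fin n, H x y) = H x p + H x q + ∑ y ∈ T, H x y :=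
      fun x _ => sum_split p q hpq.ne (H x)
    rw [Finset.sum_congr rfl this]
    simp only [Finset.sum_add_distrib, ← hT]
    ring
  rw [len_mul_swap_eq_sum w p q, len_eq_sum, hsplit F, hsplit G]
  have hsp : ((Equiv.swap p q p : Fin n) : ℕ) = q := by rw [Equiv.swap_apply_left]
  have hsq : ((Equiv.swap p q q : Fin n) : ℕ) = p := by rw [Equiv.swap_apply_right]
  have hpq' : (p : ℕ) < q := hpq
  have hw' : (w p : ℕ) < w q := hw
  -- corner
  have hcorner : F p p + F p q + F q p + F q q = (G p p + G p q + G q p + G q q) + 1 := by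
    simp only [hF, hG, hsp, hsq]
    split_ifs <;> omega
  -- rows
  have hrow : ∀ y ∈ T, F p y + F q y = G p y + G q y := by
    intro y hy
    obtain ⟨hy1, hy2⟩ := hmemT y hy
    have hsy : Equiv.swap p q y = y := Equiv.swap_apply_of_ne_of_ne hy1 hy2
    have h1 : (w y : ℕ) ≠ w p := fun h => hy1 (w.injective (Fin.ext h))
    have h2 : (w y : ℕ) ≠ w q := fun h => hy2 (w.injective (Fin.ext h))
    simp only [hF, hG, hsp, hsq, hsy]
    by_cases hb : (p : ℕ) < y ∧ (y : ℕ) < q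
    · have := hbtw y hb.1 hb.2
      split_ifs <;> omega
    · split_ifs <;> omega
  -- columns
  have hcol : ∀ x ∈ T, F x p + F x q = G x p + G x q := by
    intro x hx
    obtain ⟨hx1, hx2⟩ := hmemT x hx
    have hsx : Equiv.swap p q x = x := Equiv.swap_apply_of_ne_of_ne hx1 hx2
    simp only [hF, hG, hsp, hsq, hsx]
    by_cases hb : (p : ℕ) < x ∧ (x : ℕ) < q
    · have := hbtw x hb.1 hb.2
      split_ifs <;> omega
    · split_ifs <;> omega
  -- rest
  have hrest : ∀ x ∈ T, ∀ y ∈ T, F x y = G x y := by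
    intro x hx y hy
    obtain ⟨hx1, hx2⟩ := hmemT x hx
    obtain ⟨hy1, hy2⟩ := hmemT y hy
    simp only [hF, hG, Equiv.swap_apply_of_ne_of_ne hx1 hx2,
      Equiv.swap_apply_of_ne_of_ne hy1 hy2]
  rw [Finset.sum_congr rfl hrow, Finset.sum_congr rfl hcol, hcorner]
  have : ∑ x ∈ T, ∑ y ∈ T, F x y = ∑ x ∈ T, ∑ y ∈ T, G x y :=
    Finset.sum_congr rfl (fun x hx => Finset.sum_congr rfl (hrest x hx))
  omega

/-- greedy property -/
def GrP {n : ℕ} (m : Fin n → Fin n) (w : Perm (Fin n)) : Prop :=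
  (∀ j, w j ≤ m j) ∧ ∀ j b : Fin n, b ≤ m j → (∀ k, k < j → w k ≠ b) → b ≤ w j

lemma lexmax_greedy {n : ℕ} {m : Fin n → Fin n} {w : Perm (Fin n)}
    (hm : Hess m) (hw : IsLexMax m w) : GrP m w := by
  refine ⟨hw.1, fun j b hbm hun => ?_⟩
  by_contra hlt
  push_neg at hlt
  have hbj : w j ≠ b := ne_of_lt hlt
  have hwq : w (w⁻¹ b) = b := Equiv.apply_symm_apply w b
  have hqj : w⁻¹ b ≠ j := fun h => hbj (by rw [← h]; exact hwq)
  have hjq : j < w⁻¹ b := by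
    rcases lt_trichotomy (w⁻¹ b) j with h | h | h
    · exact absurd hwq (hun _ h)
    · exact absurd h hqj
    · exact h
  have huj : (w * Equiv.swap j (w⁻¹ b)) j = b := by
    simp [Equiv.swap_apply_left, hwq]
  have huq : (w * Equiv.swap j (w⁻¹ b)) (w⁻¹ b) = w j := by
    simp [Equiv.swap_apply_right]
  have hux : ∀ x, x ≠ j → x ≠ w⁻¹ b → (w * Equiv.swap j (w⁻¹ b)) x = w x := by
    intro x h1 h2
    rw [Perm.mul_apply, Equiv.swap_apply_of_ne_of_ne h1 h2]
  have hule : ∀ x, (w * Equiv.swap j (w⁻¹ b)) x ≤ m x := by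
    intro x
    rcases eq_or_ne x j with rfl | h1
    · rw [huj]; exact hbm
    rcases eq_or_ne x (w⁻¹ b) with h2 | h2
    · rw [h2, huq]; exact le_trans (hw.1 j) (hm.1 hjq.le)
    · rw [hux x h1 h2]; exact hw.1 x
  rcases hw.2 _ hule with h | ⟨i', hagree, hlt'⟩
  · have hj := DFunLike.congr_fun h j
    exact hbj (hj.symm.trans huj)
  · have hi' : i' = j ∨ i' = w⁻¹ b := by
      by_contra hcon
      push_neg at hcon
      rw [hux i' hcon.1 hcon.2] at hlt'
      exact lt_irrefl _ hlt'
    rcases hi' with rfl | rfl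
    · rw [huj] at hlt'; exact absurd hlt' (not_lt.mpr hlt.le)
    · have h2 := hagree j hjq
      rw [huj] at h2
      exact hbj h2.symm

lemma greedy_agree {n : ℕ} {m m' : Fin n → Fin n} {u w : Perm (Fin n)}
    (hu : GrP m u) (hw : GrP m' w) (N : ℕ) (hm : ∀ k : Fin n, (k : ℕ) < N → m k = m' k) :
    ∀ k : Fin n, (k : ℕ) < N → u k = w k := by
  have key : ∀ K : ℕ, ∀ k : Fin n, (k : ℕ) < N → (k : ℕ) < K → u k = w k := by
    intro K
    induction K with
    | zero => intro k _ h; omega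
    | succ K ih =>
      intro k hkN hkK
      rcases lt_or_ge (k : ℕ) K with h | h
      · exact ih k hkN h
      have hIH : ∀ k' : Fin n, k' < k → u k' = w k' := by
        intro k' hk'
        have hv : (k' : ℕ) < (k : ℕ) := hk'
        exact ih k' (by omega) (by omega)
      have h1 : w k ≤ u k := by
        refine hu.2 k (w k) (by rw [hm k hkN]; exact hw.1 k) ?_
        intro k' hk' hc
        rw [hIH k' hk'] at hc
        exact (ne_of_lt hk') (w.injective hc)
      have h2 : u k ≤ w k := by
        refine hw.2 k (u k) (by rw [← hm k hkN]; exact hu.1 k) ?_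
        intro k' hk' hc
        rw [← hIH k' hk'] at hc
        exact (ne_of_lt hk') (u.injective hc)
      exact le_antisymm h2 h1
  intro k hk
  exact key n k hk k.isLt

theorem stmt16 {n : ℕ} (m0 m1 m2 : Fin n → Fin n)
    (h0 : Hess m0) (h1 : Hess m1) (h2 : Hess m2) (i : Fin n)
    (hne : ∀ j, j ≠ i → m0 j = m1 j ∧ m2 j = m1 j)
    (hi0 : (m0 i : ℕ) + 1 = (m1 i : ℕ)) (hi2 : (m1 i : ℕ) + 1 = (m2 i : ℕ))
    (hl : (m1 i : ℕ) + 1 < n)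
    (hm1 : m1 ⟨(m1 i : ℕ) + 1, hl⟩ = m1 (m1 i))
    (s : Equiv.Perm (Fin n)) (hs : s = Equiv.swap (m1 i) ⟨(m1 i : ℕ) + 1, hl⟩)
    (w0 w1 w2 : Equiv.Perm (Fin n))
    (hw0 : IsLexMax m0 w0) (hw1 : IsLexMax m1 w1) (hw2 : IsLexMax m2 w2) :
    BruhatLT (w1 * s) w1 ∧ BruhatLT w1 (s * w1) ∧ s * w1 = w2 ∧
    BruhatLE w0 w1 ∧ len w0 + 1 = len w1 ∧ BruhatLT (s * w0) w0 := by
  classical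
  have hG0 : GrP m0 w0 := lexmax_greedy h0 hw0
  have hG1 : GrP m1 w1 := lexmax_greedy h1 hw1
  have hG2 : GrP m2 w2 := lexmax_greedy h2 hw2
  obtain ⟨L1, hL1def⟩ : ∃ x : Fin n, x = ⟨(m1 i : ℕ) + 1, hl⟩ := ⟨_, rfl⟩
  rw [← hL1def] at hm1 hs
  obtain ⟨l, hldef⟩ : ∃ x : Fin n, x = m1 i := ⟨_, rfl⟩
  rw [← hldef] at hi0 hi2 hm1 hs
  have hL1v : (L1 : ℕ) = (l : ℕ) + 1 := by rw [hL1def, hldef]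
  -- s facts
  have hsl : s l = L1 := by rw [hs]; exact Equiv.swap_apply_left _ _
  have hsL1 : s L1 = l := by rw [hs]; exact Equiv.swap_apply_right _ _
  have hsfix : ∀ v : Fin n, v ≠ l → v ≠ L1 → s v = v := by
    intro v h1' h2'; rw [hs]; exact Equiv.swap_apply_of_ne_of_ne h1' h2'
  -- basic numeric facts
  have hil : (i : ℕ) < (l : ℕ) := by
    have := h0.2 i; have h' : (i : ℕ) ≤ (m0 i : ℕ) := this; omega
  -- values below i are < l
  have hm1lt : ∀ k : Fin n, (k : ℕ) < (i : ℕ) → (m1 k : ℕ) < (l : ℕ) := by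
    intro k hk
    have hki : k ≠ i := Fin.ne_of_lt hk
    have h1' : m0 k = m1 k := (hne k hki).1
    have h2' : m0 k ≤ m0 i := h0.1 (le_of_lt hk)
    have h2v : (m0 k : ℕ) ≤ (m0 i : ℕ) := h2'
    omega
  have hlow : ∀ k : Fin n, (k : ℕ) < (i : ℕ) → (w1 k : ℕ) < (l : ℕ) := by
    intro k hk
    have := hG1.1 k
    have hv : (w1 k : ℕ) ≤ (m1 k : ℕ) := this
    have := hm1lt k hk
    omega
  -- w1 i = l
  have hw1i : w1 i = l := by
    have h1' : l ≤ w1 i := by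
      refine hG1.2 i l (le_of_eq hldef) ?_
      intro k hk hc
      have := hlow k hk
      rw [hc] at this
      omega
    exact le_antisymm (by rw [hldef]; exact hG1.1 i) h1'
  -- m1 j ≥ l + 1 for j > i
  have hmge : ∀ j : Fin n, (i : ℕ) < (j : ℕ) → (l : ℕ) + 1 ≤ (m1 j : ℕ) := by
    intro j hj
    have hji : j ≠ i := Fin.ne_of_gt hj
    have h1' : m2 j = m1 j := (hne j hji).2
    have h2' : m2 i ≤ m2 j := h2.1 (le_of_lt hj)
    have h2v : (m2 i : ℕ) ≤ (m2 j : ℕ) := h2'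
    omega
  -- agree below i
  have hagree01 : ∀ k : Fin n, (k : ℕ) < (i : ℕ) → w0 k = w1 k :=
    greedy_agree hG0 hG1 i (fun k hk => (hne k (Fin.ne_of_lt hk)).1)
  -- a and js
  obtain ⟨a, hadef⟩ : ∃ x : Fin n, x = w0 i := ⟨_, rfl⟩
  have hal : (a : ℕ) < (l : ℕ) := by
    have h' : ((w0 i) : ℕ) ≤ (m0 i : ℕ) := hG0.1 i
    rw [← hadef] at h'
    omega
  obtain ⟨js, hjsdef⟩ : ∃ x : Fin n, x = w1⁻¹ a := ⟨_, rfl⟩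
  have hw1js : w1 js = a := by rw [hjsdef]; exact Equiv.apply_symm_apply w1 a
  have hijs : (i : ℕ) < (js : ℕ) := by
    rcases lt_trichotomy (js : ℕ) (i : ℕ) with h | h | h
    · exfalso
      have h2' := hagree01 js h
      rw [hw1js, hadef] at h2'
      have := w0.injective h2'
      rw [this] at h; omega
    · exfalso
      have : js = i := Fin.ext h
      rw [this, hw1i] at hw1js
      rw [← hw1js] at hal; omega
    · exact h
  -- between i and js, w1 values are > l
  have hbtw6 : ∀ k : Fin n, (i : ℕ) < (k : ℕ) → (k : ℕ) < (js : ℕ) → (l : ℕ) < (w1 k : ℕ) := by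
    intro k hk1 hk2
    by_contra hcon
    push_neg at hcon
    have hkne : (w1 k : ℕ) ≠ (l : ℕ) := by
      intro h
      have : w1 k = w1 i := by rw [hw1i]; exact Fin.ext h
      have := w1.injective this
      rw [this] at hk1; omega
    have hcl : (w1 k : ℕ) < (l : ℕ) := by omega
    have hac : a ≤ w1 k := by
      refine hG1.2 k a ?_ ?_
      · show (a : ℕ) ≤ (m1 k : ℕ)
        have := hmge k hk1; omega
      · intro k' hk' hc
        have : k' = js := w1.injective (by rw [hc, hw1js])
        rw [this] at hk'
        have : (js : ℕ) < (k : ℕ) := hk'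
        omega
    have hacv : (a : ℕ) ≤ (w1 k : ℕ) := hac
    have hane : a ≠ w1 k := by
      intro h
      have : js = k := w1.injective (by rw [hw1js, h])
      rw [this] at hk2; omega
    have hav : (a : ℕ) < (w1 k : ℕ) := lt_of_le_of_ne hacv (fun h => hane (Fin.ext h))
    have hcle : w1 k ≤ w0 i := by
      refine hG0.2 i (w1 k) ?_ ?_
      · show ((w1 k) : ℕ) ≤ (m0 i : ℕ); omega
      · intro k' hk' hc
        have hk'v : (k' : ℕ) < (i : ℕ) := hk'
        rw [hagree01 k' hk'v] at hc
        have := w1.injective hc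
        rw [this] at hk'v; omega
    rw [← hadef] at hcle
    have : ((w1 k) : ℕ) ≤ (a : ℕ) := hcle
    omega
  -- k0
  obtain ⟨k0, hk0def⟩ : ∃ x : Fin n, x = w1⁻¹ L1 := ⟨_, rfl⟩
  have hw1k0 : w1 k0 = L1 := by rw [hk0def]; exact Equiv.apply_symm_apply w1 L1
  have hik0 : (i : ℕ) < (k0 : ℕ) := by
    rcases lt_trichotomy (k0 : ℕ) (i : ℕ) with h | h | h
    · have := hlow k0 h; rw [hw1k0] at this; rw [hL1v] at this; omega
    · exfalso
      have : k0 = i := Fin.ext h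
      rw [this, hw1i] at hw1k0
      have : (l : ℕ) = (L1 : ℕ) := congrArg Fin.val hw1k0
      omega
    · exact h
  have hk0js : (k0 : ℕ) < (js : ℕ) := by
    rcases lt_trichotomy (k0 : ℕ) (js : ℕ) with h | h | h
    · exact h
    · exfalso
      have : k0 = js := Fin.ext h
      rw [this, hw1js] at hw1k0
      have : (a : ℕ) = (L1 : ℕ) := congrArg Fin.val hw1k0
      omega
    · exfalso
      have hLa : L1 ≤ w1 js := by
        refine hG1.2 js L1 ?_ ?_
        · show (L1 : ℕ) ≤ (m1 js : ℕ)
          have := hmge js hijs; omega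
        · intro k' hk' hc
          have : k' = k0 := w1.injective (by rw [hc, hw1k0])
          rw [this] at hk'
          have : (k0 : ℕ) < (js : ℕ) := hk'
          omega
      have : (L1 : ℕ) ≤ (w1 js : ℕ) := hLa
      rw [hw1js] at this; omega
  -- descent of w1 at positions l, l+1
  have hstep9 : (w1 L1 : ℕ) < (w1 l : ℕ) := by
    have hc1 : w1 L1 ≤ m1 l := by rw [← hm1]; exact hG1.1 L1
    have h1' : w1 L1 ≤ w1 l := by
      refine hG1.2 l (w1 L1) hc1 ?_
      intro k hk hc
      have := w1.injective hc
      have hkv : (k : ℕ) < (l : ℕ) := hk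
      rw [this] at hkv
      rw [hL1v] at hkv; omega
    have hne' : w1 L1 ≠ w1 l := by
      intro h
      have := w1.injective h
      have : (L1 : ℕ) = (l : ℕ) := congrArg Fin.val this
      omega
    exact lt_of_le_of_ne h1' (fun h => hne' (Fin.ext h))
  -- GrP m2 (s * w1)
  have hvapp : ∀ x : Fin n, (s * w1) x = s (w1 x) := fun x => rfl
  have hvi : (s * w1) i = L1 := by rw [hvapp, hw1i, hsl]
  have hvk0 : (s * w1) k0 = l := by rw [hvapp, hw1k0, hsL1]
  have hvx : ∀ x : Fin n, x ≠ i → x ≠ k0 → (s * w1) x = w1 x := by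
    intro x h1' h2'
    rw [hvapp]
    refine hsfix (w1 x) ?_ ?_
    · intro h; exact h1' (w1.injective (by rw [h, hw1i]))
    · intro h; exact h2' (w1.injective (by rw [h, hw1k0]))
  have hm2i : (m2 i : ℕ) = (L1 : ℕ) := by omega
  have hGv : GrP m2 (s * w1) := by
    constructor
    · intro x
      rcases eq_or_ne x i with rfl | hxi
      · rw [hvi]
        show (L1 : ℕ) ≤ (m2 x : ℕ); omega
      rcases eq_or_ne x k0 with hx | hxk
      · rw [hx, hvk0]
        show (l : ℕ) ≤ (m2 k0 : ℕ)
        rw [(hne k0 (by rw [← hx]; exact hxi)).2]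
        have := hmge k0 hik0; omega
      · rw [hvx x hxi hxk, (hne x hxi).2]
        exact hG1.1 x
    · intro j b hb hun
      rcases eq_or_ne j i with hj | hji
      · rw [hj, hvi]
        show (b : ℕ) ≤ (L1 : ℕ)
        have hbv : (b : ℕ) ≤ (m2 j : ℕ) := hb
        rw [hj] at hbv
        omega
      have hbm1 : (b : ℕ) ≤ (m1 j : ℕ) := by
        have : (b : ℕ) ≤ (m2 j : ℕ) := hb
        rw [(hne j hji).2] at this; exact this
      rcases eq_or_ne j k0 with hj | hjk
      · rw [hj] at hbm1 hun ⊢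
        rw [hvk0]
        show (b : ℕ) ≤ (l : ℕ)
        by_contra hcon
        push_neg at hcon
        have hbL1 : b ≠ L1 := by
          intro h
          have hij : i < k0 := by rw [Fin.lt_def]; exact hik0
          exact hun i hij (by rw [hvi, h])
        have hbL1v : (b : ℕ) ≠ (L1 : ℕ) := fun h => hbL1 (Fin.ext h)
        have hble : b ≤ w1 k0 := by
          refine hG1.2 k0 b hbm1 ?_
          intro k hk hc
          rcases eq_or_ne k i with rfl | hki
          · rw [hw1i] at hc
            rw [← hc] at hcon; omega
          rcases eq_or_ne k k0 with rfl | hkk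
          · exact absurd rfl (Fin.ne_of_lt hk)
          · exact hun k hk (by rw [hvx k hki hkk, hc])
        have hblev : (b : ℕ) ≤ (w1 k0 : ℕ) := hble
        rw [hw1k0] at hblev
        omega
      -- j ∉ {i, k0}
      rw [hvx j hji hjk]
      rcases eq_or_ne (b : ℕ) (l : ℕ) with hbl | hbl
      · -- b = l
        show (b : ℕ) ≤ (w1 j : ℕ)
        rcases lt_trichotomy (j : ℕ) (i : ℕ) with h | h | h
        · exfalso
          have := hm1lt j h
          omega
        · exact absurd (Fin.ext h) hji
        rcases lt_trichotomy (j : ℕ) (k0 : ℕ) with h' | h' | h'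
        · have := hbtw6 j h (by omega)
          omega
        · exact absurd (Fin.ext h') hjk
        · exfalso
          refine hun k0 (by rw [Fin.lt_def]; exact h') ?_
          rw [hvk0]; exact Fin.ext hbl.symm
      rcases eq_or_ne (b : ℕ) (L1 : ℕ) with hbL | hbL
      · -- b = L1 : impossible
        exfalso
        rcases lt_trichotomy (j : ℕ) (i : ℕ) with h | h | h
        · have := hm1lt j h; omega
        · exact absurd (Fin.ext h) hji
        · refine hun i (by rw [Fin.lt_def]; exact h) ?_
          rw [hvi]; exact Fin.ext hbL.symm
      · -- generic b
        refine hG1.2 j b hbm1 ?_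
        intro k hk hc
        rcases eq_or_ne k i with rfl | hki
        · rw [hw1i] at hc
          exact hbl (congrArg Fin.val hc).symm
        rcases eq_or_ne k k0 with rfl | hkk
        · rw [hw1k0] at hc
          exact hbL (congrArg Fin.val hc).symm
        · exact hun k hk (by rw [hvx k hki hkk, hc])
  -- s * w1 = w2
  have hsw1w2 : s * w1 = w2 := by
    refine Equiv.ext (fun k => ?_)
    exact greedy_agree hGv hG2 n (fun k _ => rfl) k k.isLt
  -- GrP m0 (w1 * swap i js)
  have hjsi : js ≠ i := by intro h; rw [h] at hijs; omega
  have huapp : ∀ x : Fin n, (w1 * Equiv.swap i js) x = w1 (Equiv.swap i js x) := fun x => rfl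
  have hui : (w1 * Equiv.swap i js) i = a := by
    rw [huapp, Equiv.swap_apply_left, hw1js]
  have hujs : (w1 * Equiv.swap i js) js = l := by
    rw [huapp, Equiv.swap_apply_right, hw1i]
  have hux : ∀ x : Fin n, x ≠ i → x ≠ js → (w1 * Equiv.swap i js) x = w1 x := by
    intro x h1' h2'
    rw [huapp, Equiv.swap_apply_of_ne_of_ne h1' h2']
  have hGu : GrP m0 (w1 * Equiv.swap i js) := by
    constructor
    · intro x
      rcases eq_or_ne x i with hx | hxi
      · rw [hx, hui, hadef]; exact hG0.1 i
      rcases eq_or_ne x js with hx | hxjs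
      · rw [hx, hujs]
        show (l : ℕ) ≤ (m0 js : ℕ)
        rw [(hne js hjsi).1]
        have := hmge js hijs; omega
      · rw [hux x hxi hxjs]
        show ((w1 x) : ℕ) ≤ (m0 x : ℕ)
        rw [(hne x hxi).1]
        exact hG1.1 x
    · intro j b hb hun
      rcases eq_or_ne j i with hj | hji
      · rw [hj] at hb hun ⊢
        rw [hui, hadef]
        refine hG0.2 i b hb ?_
        intro k hk hc
        have hkv : (k : ℕ) < (i : ℕ) := hk
        refine hun k hk ?_
        rw [hux k (Fin.ne_of_lt hk) (by intro h; rw [h] at hkv; omega)]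
        rw [← hagree01 k hkv, hc]
      have hbm1j : (b : ℕ) ≤ (m1 j : ℕ) := by
        have hbv : (b : ℕ) ≤ (m0 j : ℕ) := hb
        rw [(hne j hji).1] at hbv; exact hbv
      rcases eq_or_ne j js with hj | hjjs
      · rw [hj] at hbm1j hun ⊢
        rw [hujs]
        show (b : ℕ) ≤ (l : ℕ)
        by_contra hcon
        push_neg at hcon
        have hble : b ≤ w1 js := by
          refine hG1.2 js b (by show (b : ℕ) ≤ (m1 js : ℕ); omega) ?_
          intro k hk hc
          rcases eq_or_ne k i with hk' | hki
          · rw [hk', hw1i] at hc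
            have : (l : ℕ) = (b : ℕ) := congrArg Fin.val hc
            omega
          rcases eq_or_ne k js with hk' | hkjs
          · rw [hk'] at hk; exact absurd rfl (ne_of_lt hk)
          · exact hun k hk (by rw [hux k hki hkjs, hc])
        have : (b : ℕ) ≤ ((w1 js) : ℕ) := hble
        rw [hw1js] at this
        omega
      -- j ∉ {i, js}
      rw [hux j hji hjjs]
      rcases eq_or_ne (b : ℕ) (l : ℕ) with hbl | hbl
      · show (b : ℕ) ≤ ((w1 j) : ℕ)
        rcases lt_trichotomy (j : ℕ) (i : ℕ) with h | h | h
        · exfalso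
          have hbv : (b : ℕ) ≤ (m0 j : ℕ) := hb
          rw [(hne j hji).1] at hbv
          have := hm1lt j h
          omega
        · exact absurd (Fin.ext h) hji
        rcases lt_trichotomy (j : ℕ) (js : ℕ) with h' | h' | h'
        · have := hbtw6 j h h'
          omega
        · exact absurd (Fin.ext h') hjjs
        · exfalso
          refine hun js (by rw [Fin.lt_def]; exact h') ?_
          rw [hujs]; exact Fin.ext hbl.symm
      · refine hG1.2 j b (by show (b : ℕ) ≤ (m1 j : ℕ); omega) ?_
        intro k hk hc
        rcases eq_or_ne k i with hk' | hki
        · rw [hk', hw1i] at hc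
          exact hbl (congrArg Fin.val hc).symm
        rcases eq_or_ne k js with hk' | hkjs
        · rw [hk', hw1js] at hc
          have hkjv : (js : ℕ) < (j : ℕ) := by rw [← hk']; exact hk
          refine hun i (by rw [Fin.lt_def]; omega) ?_
          rw [hui, hc]
        · exact hun k hk (by rw [hux k hki hkjs, hc])
  have hw0u : w0 = w1 * Equiv.swap i js := by
    refine Equiv.ext (fun k => ?_)
    exact greedy_agree hG0 hGu n (fun k _ => rfl) k k.isLt
  -- values of w0
  have hw0js : w0 js = l := by rw [hw0u]; exact hujs
  have hw0k0 : w0 k0 = L1 := by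
    rw [hw0u]
    rw [hux k0 (by intro h; rw [h] at hik0; omega) (by intro h; rw [h] at hk0js; omega)]
    exact hw1k0
  have hw0i : w0 i = a := hadef.symm
  have hw0x : ∀ x : Fin n, x ≠ i → x ≠ js → w0 x = w1 x := by
    intro x h1' h2'; rw [hw0u]; exact hux x h1' h2'
  -- s * w1 = w1 * swap i k0
  have hsw1eq : s * w1 = w1 * Equiv.swap i k0 := by
    refine Equiv.ext (fun x => ?_)
    rcases eq_or_ne x i with hx | hxi
    · rw [hx, hvi]
      show _ = w1 (Equiv.swap i k0 i)
      rw [Equiv.swap_apply_left, hw1k0]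
    rcases eq_or_ne x k0 with hx | hxk
    · rw [hx, hvk0]
      show _ = w1 (Equiv.swap i k0 k0)
      rw [Equiv.swap_apply_right, hw1i]
    · rw [hvx x hxi hxk]
      show _ = w1 (Equiv.swap i k0 x)
      rw [Equiv.swap_apply_of_ne_of_ne hxi hxk]
  -- s * w0 = w0 * swap k0 js
  have hsw0eq : s * w0 = w0 * Equiv.swap k0 js := by
    refine Equiv.ext (fun x => ?_)
    have happ : (s * w0) x = s (w0 x) := rfl
    rcases eq_or_ne x k0 with hx | hxk
    · rw [hx]
      show s (w0 k0) = w0 (Equiv.swap k0 js k0)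
      rw [hw0k0, hsL1, Equiv.swap_apply_left, hw0js]
    rcases eq_or_ne x js with hx | hxjs
    · rw [hx]
      show s (w0 js) = w0 (Equiv.swap k0 js js)
      rw [hw0js, hsl, Equiv.swap_apply_right, hw0k0]
    · show s (w0 x) = w0 (Equiv.swap k0 js x)
      rw [Equiv.swap_apply_of_ne_of_ne hxk hxjs]
      refine hsfix (w0 x) ?_ ?_
      · intro h; exact hxjs (w0.injective (by rw [h, hw0js]))
      · intro h; exact hxk (w0.injective (by rw [h, hw0k0]))
  -- final assembly
  have hiltk0 : i < k0 := by rw [Fin.lt_def]; exact hik0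
  have hiltjs : i < js := by rw [Fin.lt_def]; exact hijs
  have hk0ltjs : k0 < js := by rw [Fin.lt_def]; exact hk0js
  have hlltL1 : l < L1 := by rw [Fin.lt_def]; omega
  refine ⟨⟨?_, ?_⟩, ⟨?_, ?_⟩, hsw1w2, ?_, ?_, ?_, ?_⟩
  · -- BruhatLE (w1 * s) w1
    rw [hs]
    exact bruhatB w1 l L1 hlltL1 (by rw [Fin.lt_def]; exact hstep9)
  · -- w1 * s ≠ w1
    intro h
    have hs1 : s = 1 := mul_left_cancel (a := w1) (by rw [mul_one]; exact h)
    rw [hs1] at hsl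
    have : (l : ℕ) = (L1 : ℕ) := congrArg Fin.val hsl
    omega
  · -- BruhatLE w1 (s * w1)
    rw [hsw1eq]
    have hdesc : (w1 * Equiv.swap i k0) k0 < (w1 * Equiv.swap i k0) i := by
      have e1 : (w1 * Equiv.swap i k0) k0 = l := by
        show w1 (Equiv.swap i k0 k0) = l
        rw [Equiv.swap_apply_right, hw1i]
      have e2 : (w1 * Equiv.swap i k0) i = L1 := by
        show w1 (Equiv.swap i k0 i) = L1
        rw [Equiv.swap_apply_left, hw1k0]
      rw [e1, e2]; exact hlltL1
    have hB := bruhatB (w1 * Equiv.swap i k0) i k0 hiltk0 hdesc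
    rw [mul_assoc, Equiv.swap_mul_self, mul_one] at hB
    exact hB
  · -- w1 ≠ s * w1
    intro h
    have := DFunLike.congr_fun h i
    rw [hw1i, hvi] at this
    have : (l : ℕ) = (L1 : ℕ) := congrArg Fin.val this
    omega
  · -- BruhatLE w0 w1
    rw [hw0u]
    refine bruhatB w1 i js hiltjs ?_
    rw [hw1i, hw1js]
    rw [Fin.lt_def]; omega
  · -- len w0 + 1 = len w1
    have hbtw' : ∀ k : Fin n, i < k → k < js → ((w0 k) : ℕ) < (w0 i : ℕ) ∨ ((w0 js) : ℕ) < (w0 k : ℕ) := by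
      intro k hk1 hk2
      have hk1v : (i : ℕ) < (k : ℕ) := hk1
      have hk2v : (k : ℕ) < (js : ℕ) := hk2
      right
      rw [hw0js, hw0x k (Fin.ne_of_gt hk1) (Fin.ne_of_lt hk2)]
      exact hbtw6 k hk1v hk2v
    have h5 := len_mul_swap w0 i js hiltjs (by rw [hw0js, ← hadef]; rw [Fin.lt_def]; exact hal) hbtw'
    have he : w0 * Equiv.swap i js = w1 := by
      rw [hw0u, mul_assoc, Equiv.swap_mul_self, mul_one]
    rw [he] at h5
    omega
  · -- BruhatLE (s * w0) w0
    rw [hsw0eq]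
    refine bruhatB w0 k0 js hk0ltjs ?_
    rw [hw0js, hw0k0]; exact hlltL1
  · -- s * w0 ≠ w0
    intro h
    have := DFunLike.congr_fun h js
    have e : (s * w0) js = L1 := by
      show s (w0 js) = L1
      rw [hw0js, hsl]
    rw [e, hw0js] at this
    have : (L1 : ℕ) = (l : ℕ) := congrArg Fin.val this
    omega
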